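/- Let p ≥ 2 be an integer, fix x ∈ H with 0 ∉ A x, and suppose y : (0, ∞) → H satisfies x − y(λ) ∈ λ • A(y(λ)) for every λ > 0. Define φ : [0, ∞) → [0, ∞) by φ(λ) = λ^{1/(p−1)}‖x − y(λ)‖ for λ > 0 and φ(0) = 0. Then φ is continuous on [0, ∞), strictly increasing, and φ(λ) → +∞ as λ → +∞. -/

import Mathlib

open scoped Pointwise
open RealInnerProductSpace Filter Topology Set Metric

private lemma stmt2_aux (l m sa sb c : ℝ) (hl : 0 < l) (hlm : l < m)
    (hsa : 0 < sa) (hsb : 0 < sb) (hc : c ≤ sa * sb)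
    (hin : 0 ≤ l⁻¹ * c - l⁻¹ * sa ^ 2 - m⁻¹ * sb ^ 2 + m⁻¹ * c) :
    sa ≤ sb ∧ l * sb ≤ m * sa := by
  have hm : 0 < m := hl.trans hlm
  have hin2 : m * sa ^ 2 + l * sb ^ 2 ≤ (m + l) * c := by
    have h := mul_le_mul_of_nonneg_left hin (mul_pos hl hm).le
    rw [mul_zero] at h
    have heq : l * m * (l⁻¹ * c - l⁻¹ * sa ^ 2 - m⁻¹ * sb ^ 2 + m⁻¹ * c)
        = (m + l) * c - (m * sa ^ 2 + l * sb ^ 2) := by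
      field_simp
      ring
    rw [heq] at h
    linarith
  have hin3 : m * sa ^ 2 + l * sb ^ 2 ≤ (m + l) * (sa * sb) := by
    nlinarith [hin2, hc, hl, hm]
  have hprod : (sb - sa) * (l * sb - m * sa) ≤ 0 := by nlinarith [hin3]
  have h1 : sa ≤ sb := by
    by_contra h'
    push_neg at h'
    have h2 : 0 ≤ l * sb - m * sa := by
      by_contra h2
      push_neg at h2
      have := mul_pos (sub_pos.2 h') (sub_pos.2 (by linarith : l * sb < m * sa))
      nlinarith [hprod, this]
    have e1 : l * sb < l * sa := by exact mul_lt_mul_of_pos_left h' hl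
    have e2 : l * sa < m * sa := by exact mul_lt_mul_of_pos_right hlm hsa
    linarith
  refine ⟨h1, ?_⟩
  by_contra h'
  push_neg at h'
  have h3 : sb ≤ sa := by
    by_contra h3
    push_neg at h3
    have := mul_pos (sub_pos.2 h3) (sub_pos.2 (by linarith : m * sa < l * sb))
    nlinarith [hprod, this]
  have heq : sa = sb := le_antisymm h1 h3
  rw [heq] at h'
  nlinarith [h', hsb, hlm]

/-- For fixed `x ∉ A⁻¹(0)`, the map
`φ(λ) = λ^{1/(p-1)} ‖x - (I + λA)⁻¹x‖` (with `φ(0) = 0`) is continuous on `[0, ∞)`,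
strictly increasing, and tends to `+∞` as `λ → +∞`. -/
theorem stmt_2 {H : Type*} [NormedAddCommGroup H] [InnerProductSpace ℝ H] [CompleteSpace H]
    (A : H → Set H)
    (hmono : ∀ x y u v : H, u ∈ A x → v ∈ A y → 0 ≤ ⟪u - v, x - y⟫)
    (p : ℕ) (hp : 2 ≤ p)
    (x : H) (hx : 0 ∉ A x)
    (y : ℝ → H) (hy : ∀ l : ℝ, 0 < l → x - y l ∈ l • A (y l))
    (φ : ℝ → ℝ)
    (hφ : ∀ l : ℝ, 0 < l → φ l = l ^ (1 / ((p : ℝ) - 1)) * ‖x - y l‖)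
    (hφ0 : φ 0 = 0) :
    ContinuousOn φ (Ici 0) ∧ StrictMonoOn φ (Ici 0) ∧ Tendsto φ atTop atTop := by
  set α : ℝ := 1 / ((p : ℝ) - 1) with hα_def
  have hp1 : (1 : ℝ) ≤ (p : ℝ) - 1 := by
    have : (2 : ℝ) ≤ (p : ℝ) := by exact_mod_cast hp
    linarith
  have hα : 0 < α := by apply div_pos one_pos; linarith
  -- membership in A
  have hmem : ∀ l : ℝ, 0 < l → l⁻¹ • (x - y l) ∈ A (y l) := by
    intro l hl
    obtain ⟨v, hv, hveq⟩ := Set.mem_smul_set.mp (hy l hl)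
    have : l⁻¹ • (x - y l) = v := by
      rw [← hveq, smul_smul, inv_mul_cancel₀ hl.ne', one_smul]
    rwa [this]
  -- positivity
  have hspos : ∀ l : ℝ, 0 < l → 0 < ‖x - y l‖ := by
    intro l hl
    rw [norm_pos_iff]
    intro h0
    have hyx : y l = x := (sub_eq_zero.mp h0).symm
    have := hmem l hl
    rw [h0, smul_zero, hyx] at this
    exact hx this
  -- key monotonicity facts
  have hkey : ∀ l m : ℝ, 0 < l → l < m →
      ‖x - y l‖ ≤ ‖x - y m‖ ∧ l * ‖x - y m‖ ≤ m * ‖x - y l‖ := by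
    intro l m hl hlm
    have hm : 0 < m := hl.trans hlm
    have hin := hmono (y l) (y m) (l⁻¹ • (x - y l)) (m⁻¹ • (x - y m)) (hmem l hl) (hmem m hm)
    set a := x - y l with ha
    set b := x - y m with hb
    have hexp : ⟪l⁻¹ • a - m⁻¹ • b, y l - y m⟫ =
        l⁻¹ * ⟪a, b⟫ - l⁻¹ * ‖a‖ ^ 2 - m⁻¹ * ‖b‖ ^ 2 + m⁻¹ * ⟪a, b⟫ := by
      have hyd : y l - y m = b - a := by rw [ha, hb]; abel
      rw [hyd]
      simp only [inner_sub_left, inner_sub_right, real_inner_smul_left,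
        real_inner_self_eq_norm_sq, real_inner_comm b a]
      ring
    rw [hexp] at hin
    exact stmt2_aux l m ‖a‖ ‖b‖ ⟪a, b⟫ hl hlm (hspos l hl) (hspos m hm)
      (real_inner_le_norm a b) hin
  -- continuity of the norm map at positive points
  have hscont : ∀ l0 : ℝ, 0 < l0 → ContinuousAt (fun l => ‖x - y l‖) l0 := by
    intro l0 h0
    rw [Metric.continuousAt_iff]
    intro ε hε
    set S := ‖x - y l0‖ with hS_def
    have hSnn : 0 ≤ S := norm_nonneg _
    refine ⟨min l0 (ε * l0 / (S + 1)), lt_min h0 (by positivity), fun m hdm => ?_⟩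
    rw [Real.dist_eq] at hdm ⊢
    have hd1 : |m - l0| < l0 := lt_of_lt_of_le hdm (min_le_left _ _)
    have hd2 : |m - l0| < ε * l0 / (S + 1) := lt_of_lt_of_le hdm (min_le_right _ _)
    have hm0 : 0 < m := by
      have := abs_lt.mp hd1
      linarith [this.1]
    have hb : |‖x - y m‖ - S| * l0 ≤ |m - l0| * S := by
      rcases lt_trichotomy m l0 with h | h | h
      · obtain ⟨hh1, hh2⟩ := hkey m l0 hm0 h
        rw [abs_of_nonpos (by linarith), abs_of_neg (by linarith : m - l0 < 0)]
        linarith [hh2]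
      · simp [h, hS_def]
      · obtain ⟨hh1, hh2⟩ := hkey l0 m h0 h
        rw [abs_of_nonneg (by linarith), abs_of_pos (by linarith : (0:ℝ) < m - l0)]
        linarith [hh2]
    have hDeq : ε * l0 / (S + 1) * (S + 1) = ε * l0 := by field_simp
    nlinarith [hb, hd2, hSnn, h0, abs_nonneg (m - l0), abs_nonneg (‖x - y m‖ - S),
      mul_le_mul_of_nonneg_right hd2.le hSnn, hDeq, mul_pos hε h0]
  refine ⟨?_, ?_, ?_⟩
  · -- continuity on [0, ∞)
    intro l0 hl0
    rcases eq_or_lt_of_le (mem_Ici.mp hl0) with h0 | h0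
    · -- at 0
      subst h0
      rw [ContinuousWithinAt, hφ0]
      have hbnd : ∀ᶠ l in 𝓝[Ici (0:ℝ)] 0, ‖φ l‖ ≤ l ^ α * ‖x - y 1‖ := by
        have hmem' : Ico (0:ℝ) 1 ∈ 𝓝[Ici (0:ℝ)] 0 :=
          Ico_mem_nhdsGE (by norm_num)
        filter_upwards [hmem'] with l hl
        rcases eq_or_lt_of_le hl.1 with h | h
        · rw [← h, hφ0]
          simp [Real.zero_rpow hα.ne']
        · rw [hφ l h, Real.norm_eq_abs, abs_of_nonneg
            (mul_nonneg (Real.rpow_nonneg h.le α) (norm_nonneg _))]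
          exact mul_le_mul_of_nonneg_left ((hkey l 1 h hl.2).1) (Real.rpow_nonneg h.le α)
      apply squeeze_zero_norm' hbnd
      have : ContinuousAt (fun l : ℝ => l ^ α * ‖x - y 1‖) 0 :=
        ((Real.continuousAt_rpow_const 0 α (Or.inr hα.le)).mul continuousAt_const)
      have ht : Tendsto (fun l : ℝ => l ^ α * ‖x - y 1‖) (𝓝 0) (𝓝 0) := by
        simpa [Real.zero_rpow hα.ne'] using this.tendsto
      exact ht.mono_left nhdsWithin_le_nhds
    · -- at l0 > 0
      apply ContinuousAt.continuousWithinAt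
      have hg : ContinuousAt (fun l => l ^ α * ‖x - y l‖) l0 :=
        (Real.continuousAt_rpow_const l0 α (Or.inl h0.ne')).mul (hscont l0 h0)
      apply hg.congr
      filter_upwards [isOpen_Ioi.mem_nhds (mem_Ioi.mpr h0)] with l hl
      exact (hφ l hl).symm
  · -- strict monotonicity
    intro l hl m hm hlm
    have hm' : 0 < m := lt_of_le_of_lt (mem_Ici.mp hl) hlm
    rcases eq_or_lt_of_le (mem_Ici.mp hl) with h0 | h0
    · rw [← h0, hφ0, hφ m hm']
      exact mul_pos (Real.rpow_pos_of_pos hm' α) (hspos m hm')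
    · rw [hφ l h0, hφ m hm']
      calc l ^ α * ‖x - y l‖ < m ^ α * ‖x - y l‖ := by
            exact mul_lt_mul_of_pos_right (Real.rpow_lt_rpow h0.le hlm hα) (hspos l h0)
        _ ≤ m ^ α * ‖x - y m‖ :=
            mul_le_mul_of_nonneg_left ((hkey l m h0 hlm).1) (Real.rpow_nonneg hm'.le α)
  · -- tendsto atTop
    have h1 : Tendsto (fun m : ℝ => m ^ α * ‖x - y 1‖) atTop atTop :=
      (tendsto_rpow_atTop hα).atTop_mul_const (hspos 1 one_pos)
    apply tendsto_atTop_mono' atTop ?_ h1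
    filter_upwards [eventually_gt_atTop (1:ℝ)] with m hm
    rw [hφ m (lt_trans one_pos hm)]
    exact mul_le_mul_of_nonneg_left ((hkey 1 m one_pos hm).1)
      (Real.rpow_nonneg (by linarith) α)
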